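/- For real t > 0 and every natural number k, C(t,k)^{-1} · ∑_{m=1}^{∞} ((-1)^m/m)·C(t, m+k) - ∑_{m=1}^{∞} ((-1)^m/m)·C(t,m) = ∑_{m=1}^{k} ((-1)^{m-1}/m)·C(k,m), assuming C(t,k) ≠ 0. -/

import Mathlib

/-- Generalized binomial coefficient C(t, m) = t(t-1)⋯(t-m+1)/m!. -/
noncomputable def rchoose (t : ℝ) (m : ℕ) : ℝ :=
  (∏ i ∈ Finset.range m, (t - i)) / m.factorial

lemma rchoose_zero (t : ℝ) : rchoose t 0 = 1 := by simp [rchoose]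

lemma rchoose_succ (t : ℝ) (n : ℕ) :
    rchoose t (n+1) = rchoose t n * (t - n) / (n + 1) := by
  unfold rchoose
  rw [Finset.prod_range_succ, Nat.factorial_succ]
  have h1 : (n.factorial : ℝ) ≠ 0 := by positivity
  have h2 : ((n:ℝ) + 1) ≠ 0 := by positivity
  push_cast
  rw [div_mul_eq_mul_div, div_div, mul_comm ((n:ℝ)+1)]

lemma rchoose_succ' (t : ℝ) (n : ℕ) :
    rchoose (t+1) (n+1) = (t+1)/(n+1) * rchoose t n := by
  unfold rchoose
  rw [Finset.prod_range_succ', Nat.factorial_succ]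
  have h1 : (n.factorial : ℝ) ≠ 0 := by positivity
  have h2 : ((n:ℝ) + 1) ≠ 0 := by positivity
  push_cast
  field_simp
  ring

lemma rchoose_pascal (t : ℝ) (n : ℕ) :
    rchoose (t+1) (n+1) = rchoose t (n+1) + rchoose t n := by
  rw [rchoose_succ', rchoose_succ]
  have h2 : ((n:ℝ) + 1) ≠ 0 := by positivity
  field_simp
  ring

lemma summable_abs_rchoose {t : ℝ} (ht : 0 < t) : Summable (fun n => |rchoose t n|) := by
  obtain ⟨N, hN⟩ : ∃ N : ℕ, t ≤ N := exists_nat_ge t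
  rw [← summable_nat_add_iff N]
  have key : ∀ n : ℕ, t * |rchoose t (n + N)| =
      ((n + N : ℕ) : ℝ) * |rchoose t (n + N)| - ((n + N + 1 : ℕ) : ℝ) * |rchoose t (n + N + 1)| := by
    intro n
    have h1 : rchoose t (n + N + 1) = rchoose t (n + N) * (t - (n + N : ℕ)) / ((n + N : ℕ) + 1) := rchoose_succ t (n + N)
    have ht' : t ≤ ((n + N : ℕ) : ℝ) := by
      push_cast
      linarith [Nat.cast_nonneg (α := ℝ) n]
    have h2 : |rchoose t (n + N + 1)| = |rchoose t (n + N)| * ((n + N : ℕ) - t) / ((n + N : ℕ) + 1) := by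
      rw [h1, abs_div, abs_mul, abs_of_nonneg (by positivity : (0:ℝ) ≤ ((n + N : ℕ):ℝ) + 1),
        abs_sub_comm, abs_of_nonneg (by linarith : (0:ℝ) ≤ ((n + N : ℕ):ℝ) - t)]
    rw [h2]
    have h3 : (((n + N + 1 : ℕ)) : ℝ) = ((n + N : ℕ) : ℝ) + 1 := by push_cast; ring
    rw [h3]
    field_simp
    ring
  apply summable_of_sum_range_le (c := ((N : ℝ) * |rchoose t N|) / t) (fun n => abs_nonneg _)
  intro M
  have h4 : ∑ i ∈ Finset.range M, t * |rchoose t (i + N)| =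
      (N : ℝ) * |rchoose t N| - ((M + N : ℕ) : ℝ) * |rchoose t (M + N)| := by
    have h := Finset.sum_range_sub' (fun i => ((i + N : ℕ) : ℝ) * |rchoose t (i + N)|) M
    simp only [Nat.zero_add] at h
    calc ∑ i ∈ Finset.range M, t * |rchoose t (i + N)|
        = ∑ i ∈ Finset.range M, (((i + N : ℕ):ℝ) * |rchoose t (i + N)| - ((i + 1 + N : ℕ):ℝ) * |rchoose t (i + 1 + N)|) := by
          apply Finset.sum_congr rfl
          intro i _
          rw [key i, show i + N + 1 = i + 1 + N from by omega]
      _ = _ := h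
  rw [← Finset.mul_sum] at h4
  rw [le_div_iff₀ ht]
  have h5 : (0:ℝ) ≤ ((M + N : ℕ) : ℝ) * |rchoose t (M + N)| := by positivity
  nlinarith [h4]

lemma summable_term {t : ℝ} (ht : 0 < t) (k : ℕ) :
    Summable (fun m : ℕ => ((-1:ℝ)^(m+1)/(m+1)) * rchoose t ((m+1)+k)) := by
  apply Summable.of_abs
  apply Summable.of_nonneg_of_le (fun _ => abs_nonneg _) _
    ((summable_nat_add_iff (1+k)).2 (summable_abs_rchoose ht))
  intro m
  rw [show (m+1)+k = m+(1+k) from by omega, abs_mul, abs_div, abs_pow, abs_neg, abs_one,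
    one_pow]
  have h1 : |((m:ℝ)+1)| = (m:ℝ)+1 := abs_of_pos (by positivity)
  rw [h1]
  have h2 : 1/((m:ℝ)+1) ≤ 1 := by
    rw [div_le_one (by positivity)]; linarith [Nat.cast_nonneg (α := ℝ) m]
  calc 1/((m:ℝ)+1) * |rchoose t (m+(1+k))| ≤ 1 * |rchoose t (m+(1+k))| :=
        mul_le_mul_of_nonneg_right h2 (abs_nonneg _)
    _ = _ := one_mul _

lemma summable_alt {t : ℝ} (ht : 0 < t) (k : ℕ) :
    Summable (fun m : ℕ => ((-1:ℝ)^m) * rchoose (t+1) (m+k+2)) := by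
  apply Summable.of_abs
  apply Summable.of_nonneg_of_le (fun _ => abs_nonneg _) _
    ((summable_nat_add_iff (k+2)).2 (summable_abs_rchoose (by linarith : (0:ℝ) < t+1)))
  intro m
  rw [show m+k+2 = m+(k+2) from by omega, abs_mul, abs_pow, abs_neg, abs_one, one_pow, one_mul]

lemma tsum_alt {t : ℝ} (ht : 0 < t) (k : ℕ) :
    ∑' m : ℕ, ((-1:ℝ)^m) * rchoose (t+1) (m+k+2) = rchoose t (k+1) := by
  have hs := summable_alt ht k
  have h1 := hs.hasSum.tendsto_sum_nat
  have h2 : ∀ M, ∑ m ∈ Finset.range M, ((-1:ℝ)^m) * rchoose (t+1) (m+k+2)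
      = rchoose t (k+1) - (-1:ℝ)^M * rchoose t (M+k+1) := by
    intro M
    have h := Finset.sum_range_sub' (fun j => ((-1:ℝ)^j) * rchoose t (j+k+1)) M
    simp only [pow_zero, one_mul, Nat.zero_add] at h
    rw [← h]
    apply Finset.sum_congr rfl
    intro m _
    have hp : rchoose (t+1) ((m+k+1)+1) = rchoose t ((m+k+1)+1) + rchoose t (m+k+1) :=
      rchoose_pascal t (m+k+1)
    rw [show m+k+2 = (m+k+1)+1 from rfl, hp, show m+1+k+1 = (m+k+1)+1 from by omega,
      pow_succ]
    ring
  simp only [h2] at h1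
  have habs : Filter.Tendsto (fun n => |rchoose t n|) Filter.atTop (nhds 0) :=
    (summable_abs_rchoose ht).tendsto_atTop_zero
  have h3 : Filter.Tendsto (fun M : ℕ => |rchoose t (M+k+1)|) Filter.atTop (nhds 0) :=
    habs.comp (Filter.tendsto_add_atTop_nat (k+1))
  have h0 : Filter.Tendsto (fun M : ℕ => (-1:ℝ)^M * rchoose t (M+k+1)) Filter.atTop (nhds 0) := by
    apply squeeze_zero_norm _ h3
    intro M
    rw [norm_mul, norm_pow, norm_neg, norm_one, one_pow, one_mul]
    rfl
  have h4 : Filter.Tendsto (fun M : ℕ => rchoose t (k+1) - (-1:ℝ)^M * rchoose t (M+k+1))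
      Filter.atTop (nhds (rchoose t (k+1) - 0)) := (tendsto_const_nhds).sub h0
  rw [sub_zero] at h4
  exact tendsto_nhds_unique h1 h4

lemma R_succ (k : ℕ) :
    ∑ m ∈ Finset.Icc 1 (k+1), ((-1:ℝ)^(m-1)/m) * (Nat.choose (k+1) m)
      = (∑ m ∈ Finset.Icc 1 k, ((-1:ℝ)^(m-1)/m) * (Nat.choose k m)) + 1/(k+1) := by
  rw [← Finset.Ico_add_one_right_eq_Icc, ← Finset.Ico_add_one_right_eq_Icc, Finset.sum_Ico_eq_sum_range,
    Finset.sum_Ico_eq_sum_range]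
  simp only [Nat.add_sub_cancel, Nat.add_sub_cancel_left, Nat.succ_sub_one]
  have e1 : ∀ (n : ℕ) (i : ℕ), ((-1:ℝ)^i/((1+i : ℕ):ℝ)) * (Nat.choose n (1+i))
      = ((-1:ℝ)^i/((i:ℝ)+1)) * (Nat.choose n (i+1)) := by
    intro n i
    rw [show 1+i = i+1 from by omega]
    push_cast
    ring
  simp only [e1]
  have pascal : ∀ i : ℕ, (Nat.choose (k+1) (i+1) : ℝ) = (Nat.choose k i : ℝ) + (Nat.choose k (i+1) : ℝ) := by
    intro i
    rw [Nat.choose_succ_succ]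
    push_cast
    ring
  have hsplit : ∑ i ∈ Finset.range (k+1), ((-1:ℝ)^i/((i:ℝ)+1)) * (Nat.choose (k+1) (i+1))
      = (∑ i ∈ Finset.range (k+1), ((-1:ℝ)^i/((i:ℝ)+1)) * (Nat.choose k (i+1)))
        + ∑ i ∈ Finset.range (k+1), ((-1:ℝ)^i/((i:ℝ)+1)) * (Nat.choose k i) := by
    rw [← Finset.sum_add_distrib]
    apply Finset.sum_congr rfl
    intro i _
    rw [pascal i]
    ring
  rw [hsplit]
  congr 1
  · rw [Finset.sum_range_succ, Nat.choose_succ_self]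
    simp
  · -- ∑ i in range (k+1), (-1)^i/(i+1) * C(k,i) = 1/(k+1)
    have hid : ∀ i : ℕ, ((-1:ℝ)^i/((i:ℝ)+1)) * (Nat.choose k i)
        = (1/((k:ℝ)+1)) * ((-1:ℝ)^i * (Nat.choose (k+1) (i+1))) := by
      intro i
      have h := Nat.add_one_mul_choose_eq k i
      have h' : ((k:ℝ)+1) * (Nat.choose k i) = (Nat.choose (k+1) (i+1)) * ((i:ℝ)+1) := by
        exact_mod_cast congrArg (Nat.cast : ℕ → ℝ) h
      have hi : ((i:ℝ)+1) ≠ 0 := by positivity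
      have hk : ((k:ℝ)+1) ≠ 0 := by positivity
      have h2 : ((k+1).choose (i+1) : ℝ) = ((k:ℝ)+1)*(k.choose i)/((i:ℝ)+1) := by
        rw [eq_div_iff hi]; linarith
      rw [h2]
      field_simp
    simp only [hid]
    rw [← Finset.mul_sum]
    have halt : ∑ i ∈ Finset.range (k+2), ((-1:ℝ)^i) * ((k+1).choose i) = 0 := by
      have hZ := Int.alternating_sum_range_choose (n := k+1)
      rw [if_neg (Nat.succ_ne_zero k)] at hZ
      exact_mod_cast congrArg (Int.cast : ℤ → ℝ) hZ
    rw [Finset.sum_range_succ'] at halt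
    simp only [pow_zero, one_mul, Nat.choose_zero_right, Nat.cast_one] at halt
    have hsum : ∑ i ∈ Finset.range (k+1), ((-1:ℝ)^i) * ((k+1).choose (i+1)) = 1 := by
      have : ∀ i, ((-1:ℝ)^(i+1)) * ((k+1).choose (i+1) : ℝ) = -(((-1:ℝ)^i) * ((k+1).choose (i+1))) := by
        intro i; rw [pow_succ]; ring
      simp only [this] at halt
      rw [Finset.sum_neg_distrib] at halt
      linarith
    rw [hsum]
    ring

lemma main_aux (t : ℝ) (ht : 0 < t) (k : ℕ) :
    ∑' m : ℕ, ((-1:ℝ)^(m+1)/(m+1)) * rchoose t ((m+1)+k)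
      = rchoose t k * ((∑' m : ℕ, ((-1:ℝ)^(m+1)/(m+1)) * rchoose t (m+1))
        + ∑ m ∈ Finset.Icc 1 k, ((-1:ℝ)^(m-1)/m) * (Nat.choose k m)) := by
  induction k with
  | zero => simp [rchoose_zero]
  | succ k ih =>
    have hrec : ∑' m : ℕ, ((-1:ℝ)^(m+1)/(m+1)) * rchoose t ((m+1)+(k+1))
        = (t-k)/(k+1) * ∑' m : ℕ, ((-1:ℝ)^(m+1)/(m+1)) * rchoose t ((m+1)+k)
          + rchoose t (k+1)/(k+1) := by
      have hterm : ∀ m : ℕ, ((-1:ℝ)^(m+1)/(m+1)) * rchoose t ((m+1)+(k+1))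
          = (t-k)/(k+1) * (((-1:ℝ)^(m+1)/(m+1)) * rchoose t ((m+1)+k))
            + (1/(k+1)) * (((-1:ℝ)^m) * rchoose (t+1) (m+k+2)) := by
        intro m
        have e1 : rchoose t ((m+k+1)+1)
            = rchoose t (m+k+1) * (t - ((m+k+1:ℕ):ℝ)) / (((m+k+1:ℕ):ℝ) + 1) :=
          rchoose_succ t (m+k+1)
        have e2 : rchoose (t+1) ((m+k+1)+1)
            = (t+1)/(((m+k+1:ℕ):ℝ)+1) * rchoose t (m+k+1) := rchoose_succ' t (m+k+1)
        rw [show (m+1)+(k+1) = (m+k+1)+1 from by omega, show m+k+2 = (m+k+1)+1 from rfl,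
          show (m+1)+k = m+k+1 from by omega, e1, e2, pow_succ]
        push_cast
        have hm : ((m:ℝ)+1) ≠ 0 := by positivity
        have hk1 : ((k:ℝ)+1) ≠ 0 := by positivity
        have hmk : ((m:ℝ)+(k:ℝ)+1+1) ≠ 0 := by positivity
        field_simp
        ring
      rw [tsum_congr hterm,
        Summable.tsum_add ((summable_term ht k).mul_left _) ((summable_alt ht k).mul_left _),
        tsum_mul_left, tsum_mul_left, tsum_alt ht k]
      ring
    rw [hrec, ih, R_succ, rchoose_succ]
    have hk1 : ((k:ℝ)+1) ≠ 0 := by positivity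
    field_simp
    ring

theorem binomial_sum_identity (t : ℝ) (ht : 0 < t) (k : ℕ) (hk : rchoose t k ≠ 0) :
    (rchoose t k)⁻¹ * ∑' m : ℕ, ((-1:ℝ) ^ (m + 1) / (m + 1)) * rchoose t ((m + 1) + k)
      - ∑' m : ℕ, ((-1:ℝ) ^ (m + 1) / (m + 1)) * rchoose t (m + 1)
      = ∑ m ∈ Finset.Icc 1 k, ((-1:ℝ) ^ (m - 1) / m) * (Nat.choose k m) := by
  rw [main_aux t ht k, inv_mul_cancel_left₀ hk]
  ring
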